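/- Let G be a finite simple graph, s, t vertices, and P, Q st-shortest paths of length k. Let S be a vertex set disjoint from V(P) ∪ V(Q), and let X_1, …, X_m be pairwise disjoint S-flaps of G, each disjoint from V(P) ∪ V(Q), that are pairwise equivalent: for all i, j there is a graph isomorphism between the induced subgraphs G[S ∪ X_i] and G[S ∪ X_j] restricting to the identity on S. If m > ⌈(k + 1)/2⌉, then, setting h = ⌈(k + 1)/2⌉, there exists a TJ-reconfiguration sequence from P to Q in G if and only if there exists one in the induced subgraph of G obtained by deleting X_{h+1} ∪ X_{h+2} ∪ … ∪ X_m. -/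

import Mathlib

open SimpleGraph

/-- `W` is a shortest path from `s` to `t` in `G`: a path whose length (number of edges)
equals `dist_G(s,t)`. -/
def IsShortestSTPath {V : Type*} (G : SimpleGraph V) {s t : V} (W : G.Walk s t) : Prop :=
  W.IsPath ∧ W.length = G.dist s t

/-- Two `st`-paths of the same length are TJ-adjacent if their vertex sequences differ
at exactly one position. -/
def TJAdjacent {V : Type*} (G : SimpleGraph V) {s t : V} (P Q : G.Walk s t) : Prop :=
  P.length = Q.length ∧ ∃! i : ℕ, P.getVert i ≠ Q.getVert i

/-- A TJ-reconfiguration sequence from `P` to `Q` of length `ℓ`: a sequence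
`P = P_0, P_1, …, P_ℓ = Q` of `st`-shortest paths in which consecutive paths are
TJ-adjacent. -/
def TJSeq {V : Type*} (G : SimpleGraph V) {s t : V} (P Q : G.Walk s t) (ℓ : ℕ) : Prop :=
  ∃ f : ℕ → G.Walk s t, f 0 = P ∧ f ℓ = Q ∧
    (∀ i ≤ ℓ, IsShortestSTPath G (f i)) ∧ ∀ i < ℓ, TJAdjacent G (f i) (f (i + 1))

/-- An `S`-flap of `G`: a vertex set `X` disjoint from `S` with no edges of `G` between
`X` and `V(G) ∖ (S ∪ X)`. -/
def IsFlap {V : Type*} (G : SimpleGraph V) (S X : Set V) : Prop :=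
  X ∩ S = ∅ ∧ ∀ x ∈ X, ∀ y : V, y ∉ S → y ∉ X → ¬G.Adj x y

namespace SPRAux

variable {V : Type*} {G : SimpleGraph V}

lemma getVert_map' {V' : Type*} {G' : SimpleGraph V'} (f : G →g G') {s t : V} (w : G.Walk s t) (i : ℕ) :
    (w.map f).getVert i = f (w.getVert i) := by
  induction w generalizing i with
  | nil => cases i <;> simp [Walk.getVert]
  | cons h p ih =>
    cases i with
    | zero => simp [Walk.getVert]
    | succ n => simpa [Walk.getVert] using ih n

lemma walk_eq_of_support_eq : ∀ {s t : V} (p q : G.Walk s t), p.support = q.support → p = q := by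
  intro s t p
  induction p with
  | nil =>
    intro q h
    cases q with
    | nil => rfl
    | cons hadj q' =>
      exfalso
      simp only [Walk.support_nil, Walk.support_cons] at h
      have := q'.support_ne_nil
      cases h' : q'.support with
      | nil => exact this h'
      | cons a l => rw [h'] at h; simp at h
  | @cons _ v _ hadj p' ih =>
    intro q h
    cases q with
    | nil =>
      exfalso
      simp only [Walk.support_nil, Walk.support_cons] at h
      have := p'.support_ne_nil
      cases h' : p'.support with
      | nil => exact this h'
      | cons a l => rw [h'] at h; simp at h
    | @cons _ w _ hadj' q' =>
      simp only [Walk.support_cons] at h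
      replace h : p'.support = q'.support := by simpa using h
      have hvw : v = w := by
        have h1 := p'.support_eq_cons
        have h2 := q'.support_eq_cons
        rw [h1, h2] at h
        exact (List.cons.injEq _ _ _ _).mp h |>.1
      subst hvw
      rw [ih q' h]


lemma exists_walk_retrace (ρ : V → V) :
    ∀ {s t : V} (w : G.Walk s t),
    (∀ i < w.length, G.Adj (ρ (w.getVert i)) (ρ (w.getVert (i+1)))) →
    ∃ w' : G.Walk (ρ s) (ρ t), w'.length = w.length ∧ (∀ i, w'.getVert i = ρ (w.getVert i)) ∧
      w'.support = w.support.map ρ := by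
  intro s t w
  induction w with
  | nil => exact fun _ => ⟨.nil, rfl, fun i => by cases i <;> simp [Walk.getVert], by simp⟩
  | @cons a v c hadj p ih =>
    intro hA
    have h0 : G.Adj (ρ a) (ρ v) := by
      have := hA 0 (by simp)
      simpa [Walk.getVert_zero, Walk.getVert_cons_succ, Walk.getVert_zero] using this
    obtain ⟨p', hl, hg, hs⟩ := ih (fun i hi => by
      have := hA (i+1) (by simp; omega)
      simpa [Walk.getVert_cons_succ] using this)
    refine ⟨.cons h0 p', by simp [hl], fun i => ?_, by simp [hs]⟩
    cases i with
    | zero => simp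
    | succ n => simp [Walk.getVert_cons_succ, hg n]

lemma exists_walk_induce {D : Set V} :
    ∀ {s t : V} (w : G.Walk s t) (hs : s ∈ D) (ht : t ∈ D),
    (∀ v ∈ w.support, v ∈ D) →
    ∃ w' : (G.induce D).Walk ⟨s, hs⟩ ⟨t, ht⟩, w'.length = w.length ∧
      (∀ i, (w'.getVert i : V) = w.getVert i) ∧ w'.support.map Subtype.val = w.support := by
  intro s t w
  induction w with
  | nil => exact fun hs ht _ => ⟨.nil, rfl, fun i => by cases i <;> simp [Walk.getVert], by simp⟩
  | @cons a v c hadj p ih =>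
    intro hs ht hsub
    have hv : v ∈ D := hsub v (by simp)
    have h0 : (G.induce D).Adj ⟨a, hs⟩ ⟨v, hv⟩ := by simpa using hadj
    obtain ⟨p', hl, hg, hsupp⟩ := ih hv ht (fun x hx => hsub x (by simp [hx]))
    refine ⟨.cons h0 p', by simp [hl], fun i => ?_, by simp [hsupp]⟩
    cases i with
    | zero => simp
    | succ n => simp [Walk.getVert_cons_succ, hg n]


section flap

variable {S : Set V} {m : ℕ} {X : Fin m → Set V}

lemma mem_unique (hdisj : ∀ i j, i ≠ j → Disjoint (X i) (X j)) {v : V} {a b : Fin m}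
    (ha : v ∈ X a) (hb : v ∈ X b) : a = b := by
  by_contra hne
  exact Set.disjoint_left.mp (hdisj a b hne) ha hb

variable (hequiv : ∀ i j, ∃ φ : G.induce (S ∪ X i) ≃g G.induce (S ∪ X j),
    ∀ x : ↥(S ∪ X i), (x : V) ∈ S → ((φ x : V) = (x : V)))

/-- chosen isomorphism between flaps -/
noncomputable def phi (i j : Fin m) : G.induce (S ∪ X i) ≃g G.induce (S ∪ X j) :=
  (hequiv i j).choose

lemma phi_spec (i j : Fin m) :
    ∀ x : ↥(S ∪ X i), (x : V) ∈ S → ((phi hequiv i j x : V) = (x : V)) :=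
  (hequiv i j).choose_spec

lemma phi_mem (hflap : ∀ i, IsFlap G S (X i)) {i j : Fin m} {v : V} (hv : v ∈ X i) :
    ((phi hequiv i j) ⟨v, Set.mem_union_right S hv⟩ : V) ∈ X j := by
  set y := (phi hequiv i j) ⟨v, Set.mem_union_right S hv⟩ with hy
  rcases y.2 with hyS | hyX
  · exfalso
    have hx' : ((y : V) : V) ∈ S ∪ X i := Set.mem_union_left _ hyS
    have h1 : (phi hequiv i j) ⟨(y : V), hx'⟩ = y := by
      apply Subtype.ext
      exact phi_spec hequiv i j ⟨(y : V), hx'⟩ hyS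
    have h2 : (⟨(y : V), hx'⟩ : ↥(S ∪ X i)) = ⟨v, Set.mem_union_right S hv⟩ :=
      (phi hequiv i j).toEquiv.injective (h1.trans hy)
    have : v ∈ S := by
      have := congrArg Subtype.val h2
      simp only at this
      exact this ▸ hyS
    have hempty := (hflap i).1
    exact Set.notMem_empty v (hempty ▸ Set.mem_inter hv this)
  · exact hyX

open Classical in
noncomputable def flapMap (σ : Fin m → Fin m) : V → V := fun v =>
  if h : ∃ a, v ∈ X a then
    ((phi hequiv h.choose (σ h.choose)) ⟨v, Set.mem_union_right S h.choose_spec⟩ : V)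
  else v

lemma flapMap_eq_self {σ : Fin m → Fin m} {v : V} (hv : ∀ a, v ∉ X a) :
    flapMap hequiv σ v = v :=
  dif_neg (by push_neg; exact hv)

lemma flapMap_eq_of_mem (hdisj : ∀ i j, i ≠ j → Disjoint (X i) (X j))
    {σ : Fin m → Fin m} {v : V} {a : Fin m} (hv : v ∈ X a) :
    flapMap hequiv σ v = ((phi hequiv a (σ a)) ⟨v, Set.mem_union_right S hv⟩ : V) := by
  have hex : ∃ b, v ∈ X b := ⟨a, hv⟩
  rw [flapMap, dif_pos hex]
  have ha : hex.choose = a := mem_unique hdisj hex.choose_spec hv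
  subst ha
  rfl

lemma flapMap_mem (hflap : ∀ i, IsFlap G S (X i))
    (hdisj : ∀ i j, i ≠ j → Disjoint (X i) (X j))
    {σ : Fin m → Fin m} {v : V} {a : Fin m} (hv : v ∈ X a) :
    flapMap hequiv σ v ∈ X (σ a) := by
  rw [flapMap_eq_of_mem hequiv hdisj hv]
  exact phi_mem hequiv hflap hv

lemma flapMap_congr (hdisj : ∀ i j, i ≠ j → Disjoint (X i) (X j))
    {σ σ' : Fin m → Fin m} {v : V} (h : ∀ a, v ∈ X a → σ a = σ' a) :
    flapMap hequiv σ v = flapMap hequiv σ' v := by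
  by_cases hex : ∃ a, v ∈ X a
  · obtain ⟨a, ha⟩ := hex
    rw [flapMap_eq_of_mem hequiv hdisj ha, flapMap_eq_of_mem hequiv hdisj ha, h a ha]
  · push_neg at hex
    rw [flapMap_eq_self hequiv hex, flapMap_eq_self hequiv hex]


lemma notMemS (hflap : ∀ i, IsFlap G S (X i)) {v : V} {a : Fin m} (hv : v ∈ X a) : v ∉ S :=
  fun hvS => Set.notMem_empty v ((hflap a).1 ▸ Set.mem_inter hv hvS)

lemma adj_in_flap (hflap : ∀ i, IsFlap G S (X i)) {u v : V} {a : Fin m}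
    (hu : u ∈ X a) (hv : v ∈ S ∪ X a) (hadj : G.Adj u v) {b : Fin m} :
    G.Adj ((phi hequiv a b ⟨u, Set.mem_union_right S hu⟩ : ↥(S ∪ X b)) : V)
      ((phi hequiv a b ⟨v, hv⟩ : ↥(S ∪ X b)) : V) := by
  have h1 : (G.induce (S ∪ X a)).Adj ⟨u, Set.mem_union_right S hu⟩ ⟨v, hv⟩ := by
    simpa [SimpleGraph.comap_adj] using hadj
  have h2 := (phi hequiv a b).map_adj_iff.mpr h1
  simpa [SimpleGraph.comap_adj] using h2

/-- `flapMap` is a graph homomorphism. -/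
lemma flapMap_adj (hflap : ∀ i, IsFlap G S (X i))
    (hdisj : ∀ i j, i ≠ j → Disjoint (X i) (X j))
    (σ : Fin m → Fin m) {u v : V} (hadj : G.Adj u v) :
    G.Adj (flapMap hequiv σ u) (flapMap hequiv σ v) := by
  by_cases hu : ∃ a, u ∈ X a
  · obtain ⟨a, ha⟩ := hu
    by_cases hv : ∃ b, v ∈ X b
    · obtain ⟨b, hb⟩ := hv
      by_cases hab : a = b
      · subst hab
        rw [flapMap_eq_of_mem hequiv hdisj ha, flapMap_eq_of_mem hequiv hdisj hb]
        exact adj_in_flap hequiv hflap ha (Set.mem_union_right S hb) hadj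
      · exfalso
        exact (hflap a).2 u ha v (notMemS hflap hb)
          (fun hva => hab (mem_unique hdisj hva hb)) hadj
    · push_neg at hv
      have hvS : v ∈ S := by
        by_contra hvS
        exact (hflap a).2 u ha v hvS (hv a) hadj
      rw [flapMap_eq_of_mem hequiv hdisj ha, flapMap_eq_self hequiv hv]
      have := adj_in_flap hequiv hflap ha (Set.mem_union_left _ hvS) hadj (b := σ a)
      rwa [phi_spec hequiv a (σ a) ⟨v, Set.mem_union_left _ hvS⟩ hvS] at this
  · push_neg at hu
    by_cases hv : ∃ b, v ∈ X b
    · obtain ⟨b, hb⟩ := hv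
      have huS : u ∈ S := by
        by_contra huS
        exact (hflap b).2 v hb u huS (hu b) hadj.symm
      rw [flapMap_eq_self hequiv hu, flapMap_eq_of_mem hequiv hdisj hb]
      have := adj_in_flap hequiv hflap hb (Set.mem_union_left _ huS) hadj.symm (b := σ b)
      rw [phi_spec hequiv b (σ b) ⟨u, Set.mem_union_left _ huS⟩ huS] at this
      exact this.symm
    · push_neg at hv
      rwa [flapMap_eq_self hequiv hu, flapMap_eq_self hequiv hv]

/-- injectivity of relabeling across two assignments -/
lemma flapMap_ne₂ (hflap : ∀ i, IsFlap G S (X i))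
    (hdisj : ∀ i j, i ≠ j → Disjoint (X i) (X j))
    {σ σ' : Fin m → Fin m} {u w : V} (hne : u ≠ w)
    (h : ∀ a b, u ∈ X a → w ∈ X b → (a = b ↔ σ a = σ' b)) :
    flapMap hequiv σ u ≠ flapMap hequiv σ' w := by
  by_cases hu : ∃ a, u ∈ X a
  · obtain ⟨a, ha⟩ := hu
    by_cases hw : ∃ b, w ∈ X b
    · obtain ⟨b, hb⟩ := hw
      by_cases hab : a = b
      · subst hab
        have hσ : σ a = σ' a := (h a a ha hb).mp rfl
        rw [flapMap_eq_of_mem hequiv hdisj ha, flapMap_eq_of_mem hequiv hdisj hb, ← hσ]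
        intro heq
        have := (phi hequiv a (σ a)).toEquiv.injective (Subtype.ext heq)
        exact hne (congrArg Subtype.val this)
      · have hσ : σ a ≠ σ' b := fun hc => hab ((h a b ha hb).mpr hc)
        intro heq
        have h1 : flapMap hequiv σ u ∈ X (σ a) := flapMap_mem hequiv hflap hdisj ha
        have h2 : flapMap hequiv σ' w ∈ X (σ' b) := flapMap_mem hequiv hflap hdisj hb
        rw [heq] at h1
        exact hσ (mem_unique hdisj h1 h2)
    · push_neg at hw
      intro heq
      have h1 : flapMap hequiv σ u ∈ X (σ a) := flapMap_mem hequiv hflap hdisj ha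
      rw [heq, flapMap_eq_self hequiv hw] at h1
      exact hw _ h1
  · push_neg at hu
    by_cases hw : ∃ b, w ∈ X b
    · obtain ⟨b, hb⟩ := hw
      intro heq
      have h2 : flapMap hequiv σ' w ∈ X (σ' b) := flapMap_mem hequiv hflap hdisj hb
      rw [← heq, flapMap_eq_self hequiv hu] at h2
      exact hu _ h2
    · push_neg at hw
      rwa [flapMap_eq_self hequiv hu, flapMap_eq_self hequiv hw]


lemma getVert_mem_support' {s t : V} (w : G.Walk s t) (j : ℕ) : w.getVert j ∈ w.support := by
  rcases le_or_gt j w.length with h | h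
  · exact Walk.mem_support_iff_exists_getVert.mpr ⟨j, rfl, h⟩
  · rw [w.getVert_of_length_le h.le]
    exact w.end_mem_support

/-- Counting: the number of flaps touched by a walk of length `k` is at most `(k-1)/2`. -/
lemma card_active_le (hflap : ∀ i, IsFlap G S (X i))
    (hdisj : ∀ i j, i ≠ j → Disjoint (X i) (X j))
    {s t : V} (w : G.Walk s t) {k : ℕ} (hlen : w.length = k)
    (hsX : ∀ a, s ∉ X a) (htX : ∀ a, t ∉ X a) (hsS : s ∉ S)
    (A : Finset (Fin m)) (hA : ∀ a ∈ A, ∃ j, w.getVert j ∈ X a) :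
    A.card ≤ (k - 1) / 2 := by
  classical
  -- first index entering flap `a`
  have hp : ∀ a ∈ A, ∃ j, w.getVert j ∈ X a := hA
  set p : Fin m → ℕ := fun a => if h : ∃ j, w.getVert j ∈ X a then Nat.find h else 0 with hpdef
  have hmem : ∀ a ∈ A, w.getVert (p a) ∈ X a := by
    intro a ha
    have h := hA a ha
    simp only [hpdef, dif_pos h]
    exact Nat.find_spec h
  have hmin : ∀ a ∈ A, ∀ j < p a, w.getVert j ∉ X a := by
    intro a ha j hj
    have h := hA a ha
    simp only [hpdef, dif_pos h] at hj ⊢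
    exact Nat.find_min h hj
  have hub : ∀ a ∈ A, p a ≤ k - 1 := by
    intro a ha
    have h := hA a ha
    obtain ⟨j, hj⟩ := h
    have hjk : j < k := by
      by_contra hc
      push_neg at hc
      rw [w.getVert_of_length_le (hlen ▸ hc)] at hj
      exact htX a hj
    have hple : p a ≤ j := by
      simp only [hpdef, dif_pos (hA a ha)]
      exact Nat.find_le hj
    omega
  have hlb : ∀ a ∈ A, 2 ≤ p a := by
    intro a ha
    have h0 : w.getVert 0 ≠ w.getVert (p a) ∨ p a ≠ 0 := by
      right
      intro hc
      have := hmem a ha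
      rw [hc, w.getVert_zero] at this
      exact hsX a this
    have hne0 : p a ≠ 0 := by
      intro hc
      have := hmem a ha
      rw [hc, w.getVert_zero] at this
      exact hsX a this
    have hne1 : p a ≠ 1 := by
      intro hc
      have hx := hmem a ha
      rw [hc] at hx
      rcases Nat.eq_zero_or_pos w.length with hl0 | hl1
      · rw [w.getVert_of_length_le (by omega)] at hx
        exact htX a hx
      · have hadj := w.adj_getVert_succ (i := 0) hl1
        rw [w.getVert_zero] at hadj
        exact (hflap a).2 _ hx s hsS (hsX a) hadj.symm
    omega
  -- spacing: distinct active flaps have first indices at distance ≥ 2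
  have hspace : ∀ a ∈ A, ∀ b ∈ A, a ≠ b → p b ≠ p a + 1 := by
    intro a ha b hb hab hc
    have hpa : p a < w.length := by
      have h1 := hub b hb
      have h2 := hlb a ha
      omega
    have hadj := w.adj_getVert_succ hpa
    rw [← hc] at hadj
    have hxb := hmem b hb
    have hxa := hmem a ha
    exact (hflap b).2 _ hxb _ (notMemS hflap hxa)
      (fun hcontra => hab (mem_unique hdisj hxa hcontra)) hadj.symm
  have hinj : ∀ a ∈ A, ∀ b ∈ A, p a / 2 = p b / 2 → a = b := by
    intro a ha b hb heq
    by_contra hab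
    have hne : p a ≠ p b := by
      intro hc
      have h1 := hmem a ha
      have h2 := hmem b hb
      rw [hc] at h1
      exact hab (mem_unique hdisj h1 h2)
    rcases lt_or_gt_of_ne hne with hlt | hgt
    · have h2 := hspace a ha b hb hab
      have : p a + 2 ≤ p b := by omega
      omega
    · have h2 := hspace b hb a ha (Ne.symm hab)
      have : p b + 2 ≤ p a := by omega
      omega
  calc A.card ≤ (Finset.Icc 1 ((k-1)/2)).card := by
        apply Finset.card_le_card_of_injOn (fun a => p a / 2)
        · intro a ha
          simp only [Finset.mem_coe, Finset.mem_Icc]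
          constructor
          · have := hlb a ha; omega
          · have := hub a ha
            exact Nat.div_le_div_right this
        · intro a ha b hb heq
          exact hinj a ha b hb heq
    _ = (k - 1) / 2 := by rw [Nat.card_Icc]; omega

end flap

lemma dist_induce_eq {D : Set V} {s t : V} (hs : s ∈ D) (ht : t ∈ D)
    (W' : (G.induce D).Walk ⟨s, hs⟩ ⟨t, ht⟩) (hW' : W'.length = G.dist s t) :
    (G.induce D).dist ⟨s, hs⟩ ⟨t, ht⟩ = G.dist s t := by
  apply le_antisymm
  · exact hW' ▸ SimpleGraph.dist_le W'
  · obtain ⟨w, hw⟩ := (SimpleGraph.Reachable.exists_walk_length_eq_dist (⟨W'⟩ : (G.induce D).Reachable ⟨s, hs⟩ ⟨t, ht⟩))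
    have : G.dist s t ≤ (w.map (SimpleGraph.Embedding.induce D).toHom).length :=
      SimpleGraph.dist_le _
    rwa [Walk.length_map, hw] at this

lemma TJSeq_snoc {s t : V} {P g g' : G.Walk s t} {n : ℕ} (h : TJSeq G P g n)
    (hsp : IsShortestSTPath G g') (hadj : TJAdjacent G g g') : TJSeq G P g' (n + 1) := by
  obtain ⟨f, hf0, hfn, hfsp, hfadj⟩ := h
  refine ⟨fun j => if j = n + 1 then g' else f j, by simp [hf0], by simp, ?_, ?_⟩
  · intro i hi
    by_cases hin : i = n + 1
    · simpa [hin] using hsp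
    · simpa [hin] using hfsp i (by omega)
  · intro i hi
    by_cases hin : i = n
    · subst hin
      simpa [hfn] using hadj
    · have h1 : i ≠ n + 1 := by omega
      have h2 : i + 1 ≠ n + 1 := by omega
      simpa [h1, h2, hin] using hfadj i (by omega)

end SPRAux

open SPRAux

/-- Let `P, Q` be `st`-shortest paths of length `k`, let `S` be a vertex
set disjoint from `V(P) ∪ V(Q)`, and let `X 0, …, X (m−1)` be pairwise disjoint `S`-flaps,
each disjoint from `V(P) ∪ V(Q)`, that are pairwise equivalent (for all `i, j` there is an
isomorphism `G[S ∪ X i] ≃g G[S ∪ X j]` restricting to the identity on `S`). If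
`m > ⌈(k+1)/2⌉ = h`, then there is a TJ-reconfiguration sequence from `P` to `Q` in `G` iff
there is one in the induced subgraph obtained by deleting the flaps `X h, …, X (m−1)`
(keeping only the first `h` flaps). -/
theorem stmt_17 {V : Type*} [Fintype V] (G : SimpleGraph V) (s t : V) (k : ℕ)
    (hk : G.dist s t = k)
    (P Q : G.Walk s t) (hP : IsShortestSTPath G P) (hQ : IsShortestSTPath G Q)
    (S : Set V) (hS : ∀ x ∈ S, x ∉ P.support ∧ x ∉ Q.support)
    (m : ℕ) (X : Fin m → Set V)
    (hflap : ∀ i, IsFlap G S (X i))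
    (hdisj : ∀ i j, i ≠ j → Disjoint (X i) (X j))
    (hXPQ : ∀ i, ∀ x ∈ X i, x ∉ P.support ∧ x ∉ Q.support)
    (hequiv : ∀ i j, ∃ φ : G.induce (S ∪ X i) ≃g G.induce (S ∪ X j),
      ∀ x : ↥(S ∪ X i), (x : V) ∈ S → ((φ x : V) = (x : V)))
    (hm : (k + 1 + 1) / 2 < m) :
    (∃ ℓ : ℕ, TJSeq G P Q ℓ) ↔
      ∃ (hs : s ∈ ({x : V | ∃ i : Fin m, (k + 1 + 1) / 2 ≤ (i : ℕ) ∧ x ∈ X i}ᶜ : Set V))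
        (ht : t ∈ ({x : V | ∃ i : Fin m, (k + 1 + 1) / 2 ≤ (i : ℕ) ∧ x ∈ X i}ᶜ : Set V))
        (P' Q' : (G.induce ({x : V | ∃ i : Fin m, (k + 1 + 1) / 2 ≤ (i : ℕ) ∧ x ∈ X i}ᶜ :
          Set V)).Walk ⟨s, hs⟩ ⟨t, ht⟩),
        P'.support.map Subtype.val = P.support ∧
        Q'.support.map Subtype.val = Q.support ∧
        ∃ ℓ : ℕ, TJSeq (G.induce ({x : V | ∃ i : Fin m, (k + 1 + 1) / 2 ≤ (i : ℕ) ∧ x ∈ X i}ᶜ :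
          Set V)) P' Q' ℓ := by
  classical
  set D : Set V := {x : V | ∃ i : Fin m, (k + 1 + 1) / 2 ≤ (i : ℕ) ∧ x ∈ X i}ᶜ with hD
  have hPlen : P.length = k := hP.2.trans hk
  constructor
  · rintro ⟨ℓ, f, hf0, hfℓ, hfsp, hfadj⟩
    have hsX : ∀ a, s ∉ X a := fun a hsa => (hXPQ a s hsa).1 P.start_mem_support
    have htX : ∀ a, t ∉ X a := fun a hta => (hXPQ a t hta).1 P.end_mem_support
    have hsS : s ∉ S := fun h => (hS s h).1 P.start_mem_support
    have hs : s ∈ D := fun h => by obtain ⟨i, -, hsi⟩ := h; exact hsX i hsi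
    have ht : t ∈ D := fun h => by obtain ⟨i, -, hti⟩ := h; exact htX i hti
    -- lift P into the induced subgraph
    have hPD : ∀ v ∈ P.support, v ∈ D := by
      intro v hv h
      obtain ⟨i, -, hvi⟩ := h
      exact (hXPQ i v hvi).1 hv
    obtain ⟨P', hP'len, hP'get, hP'supp⟩ := exists_walk_induce P hs ht hPD
    have hdist' : (G.induce D).dist ⟨s, hs⟩ ⟨t, ht⟩ = k :=
      (dist_induce_eq hs ht P' (by rw [hP'len, hPlen, hk])).trans hk
    have hP'path : P'.IsPath := by
      rw [Walk.isPath_def]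
      exact List.Nodup.of_map _ (hP'supp ▸ hP.1.support_nodup)
    have hP'sp : IsShortestSTPath (G.induce D) P' := ⟨hP'path, by rw [hP'len, hPlen, hdist']⟩
    -- the active flap set of a walk
    set Aset : G.Walk s t → Finset (Fin m) :=
      fun w => Finset.univ.filter (fun a => ∃ v ∈ w.support, v ∈ X a) with hAsetDef
    have hAmem : ∀ (w : G.Walk s t) (a : Fin m),
        a ∈ Aset w ↔ ∃ v ∈ w.support, v ∈ X a := by
      intro w a; simp [hAsetDef]
    have hAcard : ∀ n, n ≤ ℓ → (Aset (f n)).card ≤ (k - 1) / 2 := by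
      intro n hn
      apply card_active_le hflap hdisj (f n) ((hfsp n hn).2.trans hk) hsX htX hsS
      intro a ha
      obtain ⟨v, hv, hvX⟩ := (hAmem _ a).mp ha
      obtain ⟨j, hgv, -⟩ := Walk.mem_support_iff_exists_getVert.mp hv
      exact ⟨j, hgv ▸ hvX⟩
    -- relabeled lift construction
    have key : ∀ (w : G.Walk s t) (σ : Fin m → Fin m), (∀ a, ((σ a : ℕ) < (k + 1 + 1) / 2)) →
        ∃ w' : (G.induce D).Walk ⟨s, hs⟩ ⟨t, ht⟩,
          w'.length = w.length ∧
          (∀ j, (w'.getVert j : V) = flapMap hequiv σ (w.getVert j)) ∧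
          w'.support.map Subtype.val = w.support.map (flapMap hequiv σ) := by
      intro w σ hσ
      let hom : G →g G := ⟨flapMap hequiv σ, fun h => flapMap_adj hequiv hflap hdisj σ h⟩
      have hfs : flapMap hequiv σ s = s := flapMap_eq_self hequiv hsX
      have hft : flapMap hequiv σ t = t := flapMap_eq_self hequiv htX
      let w1 : G.Walk s t := (w.map hom).copy hfs hft
      have hw1get : ∀ j, w1.getVert j = flapMap hequiv σ (w.getVert j) := by
        intro j
        show ((w.map hom).copy hfs hft).getVert j = _
        rw [Walk.getVert_copy, getVert_map']
        rfl
      have hw1supp : w1.support = w.support.map (flapMap hequiv σ) := by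
        show ((w.map hom).copy hfs hft).support = _
        rw [Walk.support_copy, Walk.support_map]
        rfl
      have hw1len : w1.length = w.length := by
        show ((w.map hom).copy hfs hft).length = _
        rw [Walk.length_copy, Walk.length_map]
      have hsubD : ∀ v ∈ w1.support, v ∈ D := by
        intro v hv
        rw [hw1supp] at hv
        obtain ⟨x, hx, rfl⟩ := List.mem_map.mp hv
        by_cases hxF : ∃ a, x ∈ X a
        · obtain ⟨a, ha⟩ := hxF
          have hmem := flapMap_mem hequiv hflap hdisj (σ := σ) ha
          intro hcon
          obtain ⟨i, hiH, hii⟩ := hcon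
          have : i = σ a := mem_unique hdisj hii hmem
          subst this
          exact absurd (hσ a) (by omega)
        · push_neg at hxF
          rw [flapMap_eq_self hequiv hxF]
          intro hcon
          obtain ⟨i, -, hii⟩ := hcon
          exact hxF i hii
      obtain ⟨w', hlen, hget, hsupp⟩ := exists_walk_induce w1 hs ht hsubD
      exact ⟨w', hlen.trans hw1len, fun j => (hget j).trans (hw1get j),
        hsupp.trans hw1supp⟩
    -- main induction
    have main : ∀ n, n ≤ ℓ → ∃ (σ : Fin m → Fin m)
        (g : (G.induce D).Walk ⟨s, hs⟩ ⟨t, ht⟩),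
        (∀ a, ((σ a : ℕ) < (k + 1 + 1) / 2)) ∧
        (∀ a ∈ Aset (f n), ∀ b ∈ Aset (f n), σ a = σ b → a = b) ∧
        (∀ j, (g.getVert j : V) = flapMap hequiv σ ((f n).getVert j)) ∧
        g.length = k ∧
        g.support.map Subtype.val = (f n).support.map (flapMap hequiv σ) ∧
        TJSeq (G.induce D) P' g n := by
      intro n
      induction n with
      | zero =>
        intro _
        have h0m : 0 < m := by omega
        refine ⟨fun _ => ⟨0, h0m⟩, P', by intro a; simp, ?_, ?_, ?_, ?_, ?_⟩
        · intro a ha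
          exfalso
          obtain ⟨v, hv, hvX⟩ := (hAmem _ a).mp ha
          rw [hf0] at hv
          exact (hXPQ a v hvX).1 hv
        · intro j
          rw [hP'get j, hf0]
          exact (flapMap_eq_self hequiv
            (fun a hXa => (hXPQ a _ hXa).1 (getVert_mem_support' P j))).symm
        · rw [hP'len, hPlen]
        · rw [hf0, hP'supp]
          symm
          calc P.support.map (flapMap hequiv (fun _ => (⟨0, h0m⟩ : Fin m)))
              = P.support.map id := List.map_congr_left (fun v hv =>
                flapMap_eq_self hequiv (fun a hXa => (hXPQ a v hXa).1 hv))
            _ = P.support := List.map_id _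
        · exact ⟨fun _ => P', rfl, rfl, fun i _ => hP'sp, fun i hi => absurd hi (by omega)⟩
      | succ n IH =>
        intro hn1
        obtain ⟨σ, g, hlow, hinj, hget, hglen, hgsupp, hseq⟩ := IH (by omega)
        obtain ⟨hlenfn, i0, hne0, huni⟩ := hfadj n (by omega)
        set uold := (f n).getVert i0 with huold
        set unew := (f (n + 1)).getVert i0 with hunew
        have hothers : ∀ j, j ≠ i0 → (f n).getVert j = (f (n + 1)).getVert j :=
          fun j hj => by by_contra hc; exact hj (huni j hc)
        have huoldsupp : uold ∈ (f n).support := getVert_mem_support' _ i0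
        have hunewsupp : unew ∈ (f (n + 1)).support := getVert_mem_support' _ i0
        have hA1 : ∀ a ∈ Aset (f (n + 1)), a ∈ Aset (f n) ∨ unew ∈ X a := by
          intro a ha
          obtain ⟨v, hv, hvX⟩ := (hAmem _ a).mp ha
          obtain ⟨j, hgv, -⟩ := Walk.mem_support_iff_exists_getVert.mp hv
          by_cases hj : j = i0
          · right; rw [hunew, ← hj, hgv]; exact hvX
          · left
            exact (hAmem _ a).mpr ⟨v, by
              rw [← hgv, ← hothers j hj]; exact getVert_mem_support' _ j, hvX⟩
        obtain ⟨σ', hσ'low, hσ'inj, hσ'agree, hσ'cond⟩ :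
            ∃ σ' : Fin m → Fin m, (∀ a, ((σ' a : ℕ) < (k + 1 + 1) / 2)) ∧
              (∀ a ∈ Aset (f (n + 1)), ∀ b ∈ Aset (f (n + 1)), σ' a = σ' b → a = b) ∧
              (∀ a ∈ Aset (f n), σ' a = σ a) ∧
              (∀ a b, uold ∈ X a → unew ∈ X b → (a = b ↔ σ a = σ' b)) := by
          by_cases hwX : ∃ b, unew ∈ X b
          · obtain ⟨b, hb⟩ := hwX
            by_cases hbA : b ∈ Aset (f n)
            · have hsub : ∀ a ∈ Aset (f (n + 1)), a ∈ Aset (f n) := by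
                intro a ha
                rcases hA1 a ha with h | h
                · exact h
                · rwa [mem_unique hdisj h hb]
              refine ⟨σ, hlow, fun a ha b' hb' => hinj a (hsub a ha) b' (hsub b' hb'),
                fun a _ => rfl, ?_⟩
              intro a c ha hc
              have hcb : c = b := mem_unique hdisj hc hb
              subst hcb
              constructor
              · intro h; rw [h]
              · intro hσab
                have haA : a ∈ Aset (f n) := (hAmem _ a).mpr ⟨uold, huoldsupp, ha⟩
                exact hinj a haA c hbA hσab
            · -- need a fresh low flap for b
              have hcard := hAcard n (by omega)
              set T : Finset (Fin m) := (Aset (f n)).image σ with hT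
              have hTcard : T.card ≤ (k - 1) / 2 := Finset.card_image_le.trans hcard
              set L0 : Finset (Fin m) :=
                (Finset.univ : Finset (Fin ((k + 1 + 1) / 2))).image (Fin.castLE hm.le)
                with hL0
              have hL0card : L0.card = (k + 1 + 1) / 2 := by
                rw [hL0, Finset.card_image_of_injective _ (Fin.castLE_injective _),
                  Finset.card_univ, Fintype.card_fin]
              have hne : (L0 \ T).Nonempty := by
                rw [Finset.sdiff_nonempty]
                intro hsub
                have := Finset.card_le_card hsub
                omega
              obtain ⟨c, hc⟩ := hne
              obtain ⟨hcL0, hcT⟩ := Finset.mem_sdiff.mp hc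
              have hclow : (c : ℕ) < (k + 1 + 1) / 2 := by
                obtain ⟨i, -, hi⟩ := Finset.mem_image.mp hcL0
                rw [← hi]
                exact i.isLt
              refine ⟨Function.update σ b c, ?_, ?_, ?_, ?_⟩
              · intro a
                by_cases hab : a = b
                · subst hab; rw [Function.update_self]; exact hclow
                · rw [Function.update_of_ne hab]; exact hlow a
              · intro a1 ha1 a2 ha2 heq
                have hmem' : ∀ a ∈ Aset (f (n + 1)), a ≠ b → a ∈ Aset (f n) := by
                  intro a ha hab
                  rcases hA1 a ha with h | h
                  · exact h
                  · exact absurd (mem_unique hdisj h hb) hab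
                by_cases h1 : a1 = b <;> by_cases h2 : a2 = b
                · rw [h1, h2]
                · exfalso
                  rw [h1, Function.update_self, Function.update_of_ne h2] at heq
                  exact hcT (hT ▸ Finset.mem_image.mpr ⟨a2, hmem' a2 ha2 h2, heq.symm⟩)
                · exfalso
                  rw [h2, Function.update_self, Function.update_of_ne h1] at heq
                  exact hcT (hT ▸ Finset.mem_image.mpr ⟨a1, hmem' a1 ha1 h1, heq⟩)
                · rw [Function.update_of_ne h1, Function.update_of_ne h2] at heq
                  exact hinj a1 (hmem' a1 ha1 h1) a2 (hmem' a2 ha2 h2) heq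
              · intro a ha
                have hab : a ≠ b := fun h => hbA (h ▸ ha)
                rw [Function.update_of_ne hab]
              · intro a c' ha hc'
                have hcb : c' = b := mem_unique hdisj hc' hb
                subst hcb
                have haA : a ∈ Aset (f n) := (hAmem _ a).mpr ⟨uold, huoldsupp, ha⟩
                have hab : a ≠ c' := fun h => hbA (h ▸ haA)
                rw [Function.update_self]
                constructor
                · intro h; exact absurd h hab
                · intro hσc
                  exfalso
                  exact hcT (hT ▸ Finset.mem_image.mpr ⟨a, haA, hσc⟩)
          · push_neg at hwX
            have hsub : ∀ a ∈ Aset (f (n + 1)), a ∈ Aset (f n) := by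
              intro a ha
              rcases hA1 a ha with h | h
              · exact h
              · exact absurd h (hwX a)
            exact ⟨σ, hlow, fun a ha b' hb' => hinj a (hsub a ha) b' (hsub b' hb'),
              fun a _ => rfl, fun a b _ hb => absurd hb (hwX b)⟩
        obtain ⟨g', hg'lenw, hg'get, hg'supp⟩ := key (f (n + 1)) σ' hσ'low
        have hfn1len : (f (n + 1)).length = k := (hfsp (n + 1) hn1).2.trans hk
        have hg'len : g'.length = k := hg'lenw.trans hfn1len
        have hg'path : g'.IsPath := by
          rw [Walk.isPath_def]
          apply List.Nodup.of_map Subtype.val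
          rw [hg'supp]
          apply List.Nodup.map_on ?_ ((hfsp (n + 1) hn1).1.support_nodup)
          intro x hx y hy hxy
          by_contra hne
          refine flapMap_ne₂ hequiv hflap hdisj hne ?_ hxy
          intro a b ha hb
          constructor
          · intro h; rw [h]
          · intro h
            exact hσ'inj a ((hAmem _ a).mpr ⟨x, hx, ha⟩) b ((hAmem _ b).mpr ⟨y, hy, hb⟩) h
        have hg'sp : IsShortestSTPath (G.induce D) g' :=
          ⟨hg'path, hg'len.trans hdist'.symm⟩
        have hadjg : TJAdjacent (G.induce D) g g' := by
          refine ⟨by rw [hglen, hg'len], ⟨i0, ?_, ?_⟩⟩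
          · intro hcon
            have hval := congrArg Subtype.val hcon
            rw [hget i0, hg'get i0] at hval
            exact flapMap_ne₂ hequiv hflap hdisj hne0 hσ'cond hval
          · intro j hjne
            by_contra hji0
            apply hjne
            apply Subtype.ext
            rw [hget j, hg'get j, hothers j hji0]
            apply flapMap_congr hequiv hdisj
            intro a haX
            exact (hσ'agree a ((hAmem _ a).mpr ⟨(f (n + 1)).getVert j, by
              rw [← hothers j hji0]; exact getVert_mem_support' _ j, haX⟩)).symm
        exact ⟨σ', g', hσ'low, hσ'inj, hg'get, hg'len, hg'supp,
          TJSeq_snoc hseq hg'sp hadjg⟩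
    obtain ⟨σ, g, -, -, -, -, hgsupp, hseq⟩ := main ℓ le_rfl
    refine ⟨hs, ht, P', g, hP'supp, ?_, ℓ, hseq⟩
    rw [hgsupp, hfℓ]
    calc Q.support.map (flapMap hequiv σ)
        = Q.support.map id := List.map_congr_left (fun v hv =>
          flapMap_eq_self hequiv (fun a hXa => (hXPQ a v hXa).2 hv))
      _ = Q.support := List.map_id _
  · rintro ⟨hs, ht, P', Q', hP's, hQ's, ℓ, f', h0, hℓ, hsp', hadj'⟩
    have hinj : Function.Injective (SimpleGraph.Embedding.induce (G := G) D).toHom :=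
      Subtype.val_injective
    have hP'len : P'.length = k := by
      have := congrArg List.length hP's
      rw [List.length_map] at this
      have h1 := P'.length_support
      have h2 := P.length_support
      omega
    have hP'sp : IsShortestSTPath (G.induce D) P' := h0 ▸ hsp' 0 (Nat.zero_le ℓ)
    have hdist' : (G.induce D).dist ⟨s, hs⟩ ⟨t, ht⟩ = k := by
      have := dist_induce_eq hs ht P' (by rw [hP'len, hk])
      rw [this, hk]
    refine ⟨ℓ, fun j => (f' j).map (SimpleGraph.Embedding.induce D).toHom, ?_, ?_, ?_, ?_⟩
    · beta_reduce
      rw [h0]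
      apply walk_eq_of_support_eq
      rw [Walk.support_map]
      exact hP's
    · beta_reduce
      rw [hℓ]
      apply walk_eq_of_support_eq
      rw [Walk.support_map]
      exact hQ's
    · intro i hi
      beta_reduce
      obtain ⟨hpath, hlen⟩ := hsp' i hi
      refine ⟨Walk.map_isPath_of_injective hinj hpath, ?_⟩
      exact (Walk.length_map _ _).trans (by rw [hlen, hdist', hk])
    · intro i hi
      beta_reduce
      obtain ⟨hlen, ⟨i0, hne, huniq⟩⟩ := hadj' i hi
      refine ⟨(Walk.length_map _ _).trans (hlen.trans (Walk.length_map _ _).symm), ⟨i0, ?_, ?_⟩⟩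
      · beta_reduce
        intro hc
        exact hne (hinj ((getVert_map' _ (f' i) i0).symm.trans (hc.trans (getVert_map' _ (f' (i + 1)) i0))))
      · intro j hj
        beta_reduce at hj
        exact huniq j (fun hc => hj ((getVert_map' _ (f' i) j).trans ((congrArg _ hc).trans (getVert_map' _ (f' (i + 1)) j).symm)))
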